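/- arXiv:2306.10513 — 2 statements merged into one kernel-verified Lean document; each statement's English description precedes it below -/
import Mathlib

section
/- Fix initial data i₀ ∈ (0,1), s₀ ∈ (0,1−i₀]. If a sequence of controls (u_n) converges weakly* to u in L^∞(0,∞) (i.e. ∫₀^∞ u_n·g dt → ∫₀^∞ u·g dt for every g ∈ L¹(0,∞)), then s^{u_n} → s^u and i^{u_n} → i^u uniformly on every bounded subinterval of (0,∞). -/
open MeasureTheory Filter Set intervalIntegral
open scoped ENNReal

noncomputable section

/-- A control: a measurable (essentially bounded) function with values in `[0, umax]`. -/
def IsControl (umax : ℝ) (u : ℝ → ℝ) : Prop :=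
  Measurable u ∧ ∀ t : ℝ, u t ∈ Set.Icc (0 : ℝ) umax

/-- Solution of the controlled SIR system on `[0,∞)`, in integral (i.e. locally absolutely
continuous) form: `s' = -(β-u)·s·i`, `i' = (β-u)·s·i - γ·i` a.e., `s 0 = s₀`, `i 0 = i₀`. -/
def SIRSol (β γ : ℝ) (u s i : ℝ → ℝ) (s₀ i₀ : ℝ) : Prop :=
  Continuous s ∧ Continuous i ∧
  (∀ t : ℝ, 0 ≤ t → s t = s₀ + ∫ τ in (0:ℝ)..t, -((β - u τ) * s τ * i τ)) ∧
  (∀ t : ℝ, 0 ≤ t → i t = i₀ + ∫ τ in (0:ℝ)..t, ((β - u τ) * s τ * i τ - γ * i τ))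

/-- Solution of the controlled SIR system on `[0,T]`, in integral form. -/
def SIRSolOn (β γ T : ℝ) (u s i : ℝ → ℝ) (s₀ i₀ : ℝ) : Prop :=
  ContinuousOn s (Set.Icc 0 T) ∧ ContinuousOn i (Set.Icc 0 T) ∧
  (∀ t ∈ Set.Icc (0:ℝ) T, s t = s₀ + ∫ τ in (0:ℝ)..t, -((β - u τ) * s τ * i τ)) ∧
  (∀ t ∈ Set.Icc (0:ℝ) T, i t = i₀ + ∫ τ in (0:ℝ)..t, ((β - u τ) * s τ * i τ - γ * i τ))

/-- The triangle `T = {(s,i) ∈ (0,1]² : s + i ≤ 1}`. -/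
def Triangle : Set (ℝ × ℝ) :=
  {p | 0 < p.1 ∧ p.1 ≤ 1 ∧ 0 < p.2 ∧ p.2 ≤ 1 ∧ p.1 + p.2 ≤ 1}

/-- The curve `Φ_max`. -/
def PhiMax (β γ umax iM : ℝ) (x : ℝ) : ℝ :=
  if x < γ / (β - umax) then iM
  else γ / (β - umax) + iM - x + (γ / (β - umax)) * (Real.log x - Real.log (γ / (β - umax)))

/-- The curve `Φ₀`. -/
def Phi0 (β γ iM : ℝ) (x : ℝ) : ℝ :=
  if x < γ / β then iM
  else γ / β + iM - x + (γ / β) * (Real.log x - Real.log (γ / β))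

/-- The ICU (state) constraint `i(t) ≤ i_M` for all `t ≥ 0`. -/
def Admissible (iM : ℝ) (i : ℝ → ℝ) : Prop := ∀ t : ℝ, 0 ≤ t → i t ≤ iM

/-- Infinite-horizon cost `J^∞(u) = ∫₀^∞ (λ₁ u + λ₂ i) dt`, with values in `[0,∞]`. -/
def Cost (l1 l2 : ℝ) (u i : ℝ → ℝ) : ℝ≥0∞ :=
  ∫⁻ t in Set.Ioi (0:ℝ), ENNReal.ofReal (l1 * u t + l2 * i t)

/-- Finite-horizon cost `J^T(u) = ∫₀^T (λ₁ u + λ₂ i) dt`. -/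
def CostT (l1 l2 T : ℝ) (u i : ℝ → ℝ) : ℝ≥0∞ :=
  ∫⁻ t in Set.Ioc (0:ℝ) T, ENNReal.ofReal (l1 * u t + l2 * i t)

/-- The safe (no-effort) zone `A`. -/
def SafeZone (β γ iM : ℝ) : Set (ℝ × ℝ) :=
  {p | p ∈ Triangle ∧ ∃ s i : ℝ → ℝ,
    SIRSol β γ (fun _ => 0) s i p.1 p.2 ∧ Admissible iM i}

/-- The viable (feasible) set `B`. -/
def ViableSet (β γ umax iM : ℝ) : Set (ℝ × ℝ) :=
  {p | p ∈ Triangle ∧ ∃ u s i : ℝ → ℝ, IsControl umax u ∧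
    SIRSol β γ u s i p.1 p.2 ∧ Admissible iM i}

/-- Weak* convergence in `L^∞(0,∞)`: testing against every `L¹` function. -/
def WeakStarLim (un : ℕ → ℝ → ℝ) (u : ℝ → ℝ) : Prop :=
  ∀ g : ℝ → ℝ, MeasureTheory.IntegrableOn g (Set.Ioi 0) →
    Filter.Tendsto (fun n => ∫ t in Set.Ioi (0:ℝ), un n t * g t) Filter.atTop
      (nhds (∫ t in Set.Ioi (0:ℝ), u t * g t))

lemma II_mul {v f : ℝ → ℝ} {C : ℝ} (hv : Measurable v) (hC : ∀ x, |v x| ≤ C)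
    (hf : Continuous f) (a b : ℝ) :
    IntervalIntegrable (fun τ => v τ * f τ) volume a b := by
  obtain ⟨M, hM⟩ := (isCompact_uIcc (a := a) (b := b)).exists_bound_of_continuousOn
    hf.continuousOn
  refine (intervalIntegrable_const (μ := volume) (a := a) (b := b) (c := C * M)).mono_fun
    (hv.mul hf.measurable).aestronglyMeasurable ?_
  refine (ae_restrict_iff' measurableSet_uIoc).2 (Filter.Eventually.of_forall fun x hx => ?_)
  have hx' : x ∈ uIcc a b := uIoc_subset_uIcc hx
  have h0 : (0:ℝ) ≤ C := (abs_nonneg _).trans (hC x)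
  have h1 : ‖v x * f x‖ ≤ C * M := by
    rw [Real.norm_eq_abs, abs_mul]
    exact mul_le_mul (hC x) (by simpa using hM x hx') (abs_nonneg _) h0
  exact h1.trans (le_abs_self _)

lemma pos_of_integral_eq {c x : ℝ → ℝ} {T M x₀ : ℝ} (hx : Continuous x) (hT : 0 ≤ T)
    (hM : ∀ τ ∈ Icc (0:ℝ) T, |c τ| ≤ M)
    (hInt : ∀ a b : ℝ, IntervalIntegrable (fun τ => c τ * x τ) volume a b)
    (heq : ∀ t ∈ Icc (0:ℝ) T, x t = x₀ + ∫ τ in (0:ℝ)..t, c τ * x τ)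
    (hx₀ : 0 < x₀) : ∀ t ∈ Icc (0:ℝ) T, 0 < x t := by
  by_contra hcon
  push_neg at hcon
  obtain ⟨t₁, ht₁, ht₁x⟩ := hcon
  have hx0 : x 0 = x₀ := by
    have := heq 0 ⟨le_refl _, hT⟩; simpa using this
  set S : Set ℝ := {t ∈ Icc (0:ℝ) T | x t ≤ 0} with hS
  have hSne : S.Nonempty := ⟨t₁, ht₁, ht₁x⟩
  have hSbdd : BddBelow S := ⟨0, fun t ht => ht.1.1⟩
  have hSclosed : IsClosed S :=
    (isClosed_Icc.inter (isClosed_le hx continuous_const) : IsClosed (Icc (0:ℝ) T ∩ {t | x t ≤ 0}))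
  set t₀ := sInf S with ht₀
  have ht₀S : t₀ ∈ S := hSclosed.csInf_mem hSne hSbdd
  have ht₀T : t₀ ∈ Icc (0:ℝ) T := ht₀S.1
  have ht₀pos : 0 < t₀ := by
    rcases lt_or_eq_of_le ht₀T.1 with h | h
    · exact h
    · exfalso; have := ht₀S.2; rw [← h, hx0] at this; linarith
  -- x t₀ = 0 via IVT
  have hxt₀ : x t₀ = 0 := by
    have h0le : (0:ℝ) ∈ Icc (x t₀) (x 0) := ⟨ht₀S.2, by rw [hx0]; exact hx₀.le⟩
    obtain ⟨t₂, ht₂, hxt₂⟩ := intermediate_value_Icc' ht₀pos.le hx.continuousOn h0le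
    have ht₂S : t₂ ∈ S := ⟨⟨ht₂.1, ht₂.2.trans ht₀T.2⟩, hxt₂.le⟩
    have : t₀ ≤ t₂ := csInf_le hSbdd ht₂S
    have ht₂e : t₂ = t₀ := le_antisymm ht₂.2 this
    rw [← ht₂e]; exact hxt₂
  -- x ≥ 0 on [0, t₀]
  have hxnn : ∀ t ∈ Icc (0:ℝ) t₀, 0 ≤ x t := by
    intro t ht
    rcases eq_or_lt_of_le ht.2 with h | h
    · rw [h, hxt₀]
    · by_contra hneg
      push_neg at hneg
      have htS : t ∈ S := ⟨⟨ht.1, ht.2.trans ht₀T.2⟩, hneg.le⟩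
      exact absurd (csInf_le hSbdd htS) (not_le.2 h)
  have hM0 : 0 ≤ M := (abs_nonneg _).trans (hM 0 ⟨le_refl _, hT⟩)
  -- x t ≤ M * ψ t  where ψ t = ∫ t..t₀ x
  set ψ : ℝ → ℝ := fun t => ∫ τ in t..t₀, x τ with hψ
  have hψnn : ∀ t ∈ Icc (0:ℝ) t₀, 0 ≤ ψ t := by
    intro t ht
    exact intervalIntegral.integral_nonneg ht.2
      (fun τ hτ => hxnn τ ⟨ht.1.trans hτ.1, hτ.2⟩)
  have hkey : ∀ t ∈ Icc (0:ℝ) t₀, x t ≤ M * ψ t := by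
    intro t ht
    have htT : t ∈ Icc (0:ℝ) T := ⟨ht.1, ht.2.trans ht₀T.2⟩
    have h1 : x t₀ - x t = ∫ τ in t..t₀, c τ * x τ := by
      rw [heq t₀ ht₀T, heq t htT]
      have := intervalIntegral.integral_add_adjacent_intervals
        (hInt 0 t) (hInt t t₀)
      linarith [this]
    have h2 : x t = -(∫ τ in t..t₀, c τ * x τ) := by rw [← h1, hxt₀]; ring
    have h3 : x t ≤ ∫ τ in t..t₀, |c τ * x τ| := by
      rw [h2]
      have := intervalIntegral.abs_integral_le_integral_abs (f := fun τ => c τ * x τ)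
        (μ := volume) (a := t) (b := t₀) ht.2
      calc -(∫ τ in t..t₀, c τ * x τ) ≤ |∫ τ in t..t₀, c τ * x τ| := neg_le_abs _
        _ ≤ _ := this
    have h4 : (∫ τ in t..t₀, |c τ * x τ|) ≤ ∫ τ in t..t₀, M * x τ := by
      refine intervalIntegral.integral_mono_on ht.2 (hInt t t₀).abs
        ((continuous_const.mul hx).intervalIntegrable t t₀) (fun τ hτ => ?_)
      have hτ0 : τ ∈ Icc (0:ℝ) t₀ := ⟨ht.1.trans hτ.1, hτ.2⟩
      have hτT : τ ∈ Icc (0:ℝ) T := ⟨hτ0.1, hτ0.2.trans ht₀T.2⟩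
      rw [abs_mul]
      calc |c τ| * |x τ| ≤ M * |x τ| := by
            exact mul_le_mul_of_nonneg_right (hM τ hτT) (abs_nonneg _)
        _ = M * x τ := by rw [abs_of_nonneg (hxnn τ hτ0)]
    calc x t ≤ ∫ τ in t..t₀, |c τ * x τ| := h3
      _ ≤ ∫ τ in t..t₀, M * x τ := h4
      _ = M * ψ t := by rw [hψ]; simp [intervalIntegral.integral_const_mul]
  -- reverse-time Gronwall: g r = ψ (t₀ - r)
  set g : ℝ → ℝ := fun r => ψ (t₀ - r) with hg
  have hψderiv : ∀ τ : ℝ, HasDerivAt ψ (-(x τ)) τ := by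
    intro τ
    have h1 : HasDerivAt (fun y => ∫ σ in t₀..y, x σ) (x τ) τ :=
      (hx.integral_hasStrictDerivAt t₀ τ).hasDerivAt
    have h2 : ψ = fun y => -(∫ σ in t₀..y, x σ) := by
      funext y
      show (∫ τ in y..t₀, x τ) = -∫ σ in t₀..y, x σ
      exact intervalIntegral.integral_symm t₀ y
    rw [h2]; exact h1.neg
  have hgderiv : ∀ r : ℝ, HasDerivAt g (x (t₀ - r)) r := by
    intro r
    have h1 : HasDerivAt (fun r : ℝ => t₀ - r) (-1) r := (hasDerivAt_id r).const_sub t₀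
    have := (hψderiv (t₀ - r)).comp r h1
    rw [mul_neg_one, neg_neg] at this; exact this
  have hgcont : ContinuousOn g (Icc 0 t₀) :=
    (fun r _ => ((hgderiv r).continuousAt.continuousWithinAt))
  have hgron := norm_le_gronwallBound_of_norm_deriv_right_le (f := g)
    (f' := fun r => x (t₀ - r)) (δ := 0) (K := M) (ε := 0) (a := 0) (b := t₀)
    hgcont (fun r _ => (hgderiv r).hasDerivWithinAt) (by simp [hg, hψ]) ?_
  · have hfin := hgron t₀ ⟨ht₀pos.le, le_refl _⟩
    rw [gronwallBound_ε0] at hfin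
    have hg0 : ψ 0 ≤ 0 := by
      have h2 : g t₀ = ψ 0 := by rw [hg]; norm_num
      rw [h2] at hfin
      have habs : |ψ 0| ≤ 0 := by simpa [Real.norm_eq_abs] using hfin
      linarith [le_abs_self (ψ 0)]
    obtain ⟨δ, hδpos, hδ⟩ := Metric.continuousAt_iff.1 (hx.continuousAt (x := 0)) (x₀/2) (by linarith)
    set δ' : ℝ := min (δ/2) t₀ with hδ'
    have hδ'pos : 0 < δ' := lt_min (by linarith) ht₀pos
    have hδ't₀ : δ' ≤ t₀ := min_le_right _ _
    have hlow : ∀ τ ∈ Icc (0:ℝ) δ', x₀/2 ≤ x τ := by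
      intro τ hτ
      have hd : dist τ 0 < δ := by
        rw [Real.dist_eq, sub_zero, abs_of_nonneg hτ.1]
        calc τ ≤ δ' := hτ.2
          _ ≤ δ/2 := min_le_left _ _
          _ < δ := by linarith
      have h3 := hδ hd
      rw [Real.dist_eq, hx0] at h3
      have h4 := abs_lt.1 h3
      linarith [h4.1]
    have h5 : (δ' * (x₀/2)) ≤ ∫ τ in (0:ℝ)..δ', x τ := by
      have := intervalIntegral.integral_mono_on (f := fun _ => x₀/2) (g := x)
        (μ := volume) hδ'pos.le intervalIntegrable_const
        (hx.intervalIntegrable 0 δ') hlow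
      rw [intervalIntegral.integral_const] at this
      simpa [mul_comm] using this
    have h6 : (0:ℝ) ≤ ∫ τ in δ'..t₀, x τ :=
      intervalIntegral.integral_nonneg hδ't₀ (fun τ hτ => hxnn τ ⟨hδ'pos.le.trans hτ.1, hτ.2⟩)
    have h7 : ψ 0 = (∫ τ in (0:ℝ)..δ', x τ) + ∫ τ in δ'..t₀, x τ := by
      rw [hψ]
      exact (intervalIntegral.integral_add_adjacent_intervals
        (hx.intervalIntegrable 0 δ') (hx.intervalIntegrable δ' t₀)).symm
    nlinarith
  · intro r hr
    have h1 : t₀ - r ∈ Icc (0:ℝ) t₀ := ⟨by linarith [hr.2], by linarith [hr.1]⟩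
    rw [Real.norm_eq_abs, Real.norm_eq_abs, abs_of_nonneg (hxnn _ h1),
      abs_of_nonneg (hψnn _ h1)]
    simpa using hkey _ h1

lemma ctrl_abs {umax β : ℝ} (hβ : 0 < β) (humaxβ : umax < β) {u : ℝ → ℝ}
    (hu : IsControl umax u) : ∀ x, |β - u x| ≤ β := by
  intro x
  obtain ⟨h1, h2⟩ := hu.2 x
  rw [abs_le]; constructor <;> nlinarith

lemma sir_int1 {β umax : ℝ} (hβ : 0 < β) (humaxβ : umax < β) {u s i : ℝ → ℝ}
    (hu : IsControl umax u) (hs : Continuous s) (hi : Continuous i) (a b : ℝ) :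
    IntervalIntegrable (fun τ => -((β - u τ) * s τ * i τ)) volume a b := by
  have h := (II_mul (measurable_const.sub hu.1) (ctrl_abs hβ humaxβ hu) (hs.mul hi) a b).neg
  have e : (-fun τ => ((β - u τ) * (s τ * i τ))) = fun τ => -((β - u τ) * s τ * i τ) := by
    funext τ; simp only [Pi.neg_apply]; ring
  rw [← e]; exact h

lemma sir_int2 {β γ umax : ℝ} (hβ : 0 < β) (humaxβ : umax < β) {u s i : ℝ → ℝ}
    (hu : IsControl umax u) (hs : Continuous s) (hi : Continuous i) (a b : ℝ) :
    IntervalIntegrable (fun τ => (β - u τ) * s τ * i τ - γ * i τ) volume a b := by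
  have h := (II_mul (measurable_const.sub hu.1) (ctrl_abs hβ humaxβ hu) (hs.mul hi) a b).add
    ((((continuous_const : Continuous fun _ : ℝ => γ)).mul hi).neg.intervalIntegrable a b)
  have e : (fun τ => (β - u τ) * (s τ * i τ) + -(γ * i τ))
      = fun τ => (β - u τ) * s τ * i τ - γ * i τ := by funext τ; ring
  rw [← e]; exact h

lemma sir_bounds {β γ umax : ℝ} (hβ : 0 < β) (hγ : 0 < γ) (humaxβ : umax < β)
    {u s i : ℝ → ℝ} {s₀ i₀ : ℝ}
    (hu : IsControl umax u) (hsol : SIRSol β γ u s i s₀ i₀)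
    (hi₀ : 0 < i₀) (hs₀ : 0 < s₀) (hsum : s₀ + i₀ ≤ 1) {T : ℝ} (hT : 0 ≤ T) :
    ∀ t ∈ Icc (0:ℝ) T, 0 < s t ∧ 0 < i t ∧ s t + i t ≤ 1 := by
  obtain ⟨hs, hi, hseq, hieq⟩ := hsol
  have hβu : ∀ x, |β - u x| ≤ β := ctrl_abs hβ humaxβ hu
  have hmeasβu : Measurable (fun τ => β - u τ) := measurable_const.sub hu.1
  -- integrability of the two basic integrands
  have hint1 : ∀ a b : ℝ, IntervalIntegrable (fun τ => -((β - u τ) * s τ * i τ)) volume a b := by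
    intro a b
    have h := (II_mul hmeasβu hβu (hs.mul hi) a b).neg
    have e : (-fun τ => ((β - u τ) * (s τ * i τ))) = fun τ => -((β - u τ) * s τ * i τ) := by
      funext τ; simp only [Pi.neg_apply]; ring
    rw [← e]; exact h
  have hint2 : ∀ a b : ℝ, IntervalIntegrable
      (fun τ => (β - u τ) * s τ * i τ - γ * i τ) volume a b := by
    intro a b
    have h := (II_mul hmeasβu hβu (hs.mul hi) a b).add
      ((((continuous_const : Continuous fun _ : ℝ => γ)).mul hi).neg.intervalIntegrable a b)
    have e : (fun τ => (β - u τ) * (s τ * i τ) + -(γ * i τ))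
        = fun τ => (β - u τ) * s τ * i τ - γ * i τ := by funext τ; ring
    rw [← e]; exact h
  -- i > 0 on [0,T]
  obtain ⟨Ms, hMs⟩ := (isCompact_Icc (a := (0:ℝ)) (b := T)).exists_bound_of_continuousOn
    hs.continuousOn
  have hipos : ∀ t ∈ Icc (0:ℝ) T, 0 < i t := by
    refine pos_of_integral_eq (c := fun τ => (β - u τ) * s τ - γ) hi hT
      (M := β * (max Ms 0) + γ) ?_ ?_ ?_ hi₀
    · intro τ hτ
      have h1 : |s τ| ≤ max Ms 0 := le_trans (by simpa using hMs τ hτ) (le_max_left _ _)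
      calc |(β - u τ) * s τ - γ| ≤ |(β - u τ) * s τ| + |γ| := abs_sub _ _
        _ = |β - u τ| * |s τ| + γ := by rw [abs_mul, abs_of_pos hγ]
        _ ≤ β * (max Ms 0) + γ := by
            have := mul_le_mul (hβu τ) h1 (abs_nonneg _) hβ.le
            linarith
    · intro a b
      have h := (II_mul hmeasβu hβu (hs.mul hi) a b).add
        ((((continuous_const : Continuous fun _ : ℝ => γ)).mul hi).neg.intervalIntegrable a b)
      have e : (fun τ => (β - u τ) * (s τ * i τ) + -(γ * i τ))
          = fun τ => ((β - u τ) * s τ - γ) * i τ := by funext τ; ring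
      rw [← e]; exact h
    · intro t ht
      have h := hieq t ht.1
      have e : (fun τ => (β - u τ) * s τ * i τ - γ * i τ)
          = fun τ => ((β - u τ) * s τ - γ) * i τ := by funext τ; ring
      rwa [e] at h
  -- s > 0 on [0,T]
  obtain ⟨Mi, hMi⟩ := (isCompact_Icc (a := (0:ℝ)) (b := T)).exists_bound_of_continuousOn
    hi.continuousOn
  have hspos : ∀ t ∈ Icc (0:ℝ) T, 0 < s t := by
    refine pos_of_integral_eq (c := fun τ => -((β - u τ) * i τ)) hs hT
      (M := β * (max Mi 0)) ?_ ?_ ?_ hs₀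
    · intro τ hτ
      have h1 : |i τ| ≤ max Mi 0 := le_trans (by simpa using hMi τ hτ) (le_max_left _ _)
      rw [abs_neg, abs_mul]
      exact mul_le_mul (hβu τ) h1 (abs_nonneg _) hβ.le
    · intro a b
      have h := (II_mul hmeasβu hβu (hi.mul hs) a b).neg
      have e : (-fun τ => ((β - u τ) * (i τ * s τ)))
          = fun τ => -((β - u τ) * i τ) * s τ := by
        funext τ; simp only [Pi.neg_apply]; ring
      rw [← e]; exact h
    · intro t ht
      have h := hseq t ht.1
      have e : (fun τ => -((β - u τ) * s τ * i τ))
          = fun τ => -((β - u τ) * i τ) * s τ := by funext τ; ring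
      rwa [e] at h
  -- s + i ≤ 1
  intro t ht
  refine ⟨hspos t ht, hipos t ht, ?_⟩
  have hsum2 : s t + i t = s₀ + i₀ + ∫ τ in (0:ℝ)..t, -(γ * i τ) := by
    rw [hseq t ht.1, hieq t ht.1]
    have h := intervalIntegral.integral_add (μ := volume) (a := (0:ℝ)) (b := t)
      (hint1 0 t) (hint2 0 t)
    have e : (fun τ => -((β - u τ) * s τ * i τ) + ((β - u τ) * s τ * i τ - γ * i τ))
        = fun τ => -(γ * i τ) := by funext τ; ring
    rw [e] at h
    linarith [h]
  have hnn : (0:ℝ) ≤ ∫ τ in (0:ℝ)..t, γ * i τ :=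
    intervalIntegral.integral_nonneg ht.1
      (fun τ hτ => le_of_lt (mul_pos hγ (hipos τ ⟨hτ.1, hτ.2.trans ht.2⟩)))
  rw [intervalIntegral.integral_neg] at hsum2
  linarith

lemma key_est {β γ umax T η : ℝ} (hβ : 0 < β) (hγ : 0 < γ) (humaxβ : umax < β) (hT : 0 ≤ T)
    {u1 u2 s1 i1 s2 i2 : ℝ → ℝ} {s₀ i₀ : ℝ}
    (hu1 : IsControl umax u1) (hu2 : IsControl umax u2)
    (hsol1 : SIRSol β γ u1 s1 i1 s₀ i₀) (hsol2 : SIRSol β γ u2 s2 i2 s₀ i₀)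
    (hb1 : ∀ t ∈ Icc (0:ℝ) T, |s1 t| ≤ 1) (hb4 : ∀ t ∈ Icc (0:ℝ) T, |i2 t| ≤ 1)
    (hη : ∀ t ∈ Icc (0:ℝ) T,
      |∫ τ in (0:ℝ)..t, (u1 τ - u2 τ) * (s2 τ * i2 τ)| ≤ η) :
    ∀ t ∈ Icc (0:ℝ) T,
      |s1 t - s2 t| + |i1 t - i2 t| ≤ 2 * η * Real.exp ((2*β+γ)*T) := by
  obtain ⟨hs1, hi1, hseq1, hieq1⟩ := hsol1
  obtain ⟨hs2, hi2, hseq2, hieq2⟩ := hsol2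
  set K : ℝ := 2*β + γ with hK
  have hKpos : 0 < K := by positivity
  set w : ℝ → ℝ := fun t => |s1 t - s2 t| + |i1 t - i2 t| with hw
  have hwcont : Continuous w := ((hs1.sub hs2).abs.add (hi1.sub hi2).abs)
  have hwnn : ∀ t, 0 ≤ w t := fun t => add_nonneg (abs_nonneg _) (abs_nonneg _)
  have hη0 : 0 ≤ η := by simpa using hη 0 ⟨le_refl _, hT⟩
  -- integrands
  set B : ℝ → ℝ := fun τ => (-(β - u1 τ)) * (s1 τ * i1 τ - s2 τ * i2 τ) with hB
  set Cf : ℝ → ℝ := fun τ => (u1 τ - u2 τ) * (s2 τ * i2 τ) with hCf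
  have hmB : Measurable (fun τ => -(β - u1 τ)) := (measurable_const.sub hu1.1).neg
  have habsB : ∀ x, |-(β - u1 x)| ≤ β := fun x => by
    rw [abs_neg]; exact ctrl_abs hβ humaxβ hu1 x
  have hBint : ∀ a b : ℝ, IntervalIntegrable B volume a b :=
    fun a b => II_mul hmB habsB (((hs1.mul hi1).sub (hs2.mul hi2))) a b
  have habsC : ∀ x, |u1 x - u2 x| ≤ umax := by
    intro x
    obtain ⟨h1, h2⟩ := hu1.2 x; obtain ⟨h3, h4⟩ := hu2.2 x
    rw [abs_le]; constructor <;> linarith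
  have hCint : ∀ a b : ℝ, IntervalIntegrable Cf volume a b :=
    fun a b => II_mul (hu1.1.sub hu2.1) habsC (hs2.mul hi2) a b
  set D : ℝ → ℝ := fun τ => (β - u1 τ) * (s1 τ * i1 τ - s2 τ * i2 τ) - γ * (i1 τ - i2 τ) with hD
  have hDint : ∀ a b : ℝ, IntervalIntegrable D volume a b := by
    intro a b
    have h := (II_mul (measurable_const.sub hu1.1) (ctrl_abs hβ humaxβ hu1)
      ((hs1.mul hi1).sub (hs2.mul hi2)) a b).add
      ((((continuous_const : Continuous fun _ : ℝ => γ)).mul (hi1.sub hi2)).neg.intervalIntegrable a b)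
    have e : (fun τ => (β - u1 τ) * ((s1 τ * i1 τ) - (s2 τ * i2 τ)) + -(γ * (i1 τ - i2 τ))) = D := by
      funext τ; rw [hD]; ring
    rw [← e]; exact h
  -- pointwise bound |B|, |D| ≤ const * w on [0,T]
  have hprod : ∀ τ ∈ Icc (0:ℝ) T, |s1 τ * i1 τ - s2 τ * i2 τ| ≤ w τ := by
    intro τ hτ
    have e : s1 τ * i1 τ - s2 τ * i2 τ = s1 τ * (i1 τ - i2 τ) + (s1 τ - s2 τ) * i2 τ := by ring
    rw [e, hw]
    calc |s1 τ * (i1 τ - i2 τ) + (s1 τ - s2 τ) * i2 τ|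
        ≤ |s1 τ * (i1 τ - i2 τ)| + |(s1 τ - s2 τ) * i2 τ| := abs_add_le _ _
      _ = |s1 τ| * |i1 τ - i2 τ| + |s1 τ - s2 τ| * |i2 τ| := by rw [abs_mul, abs_mul]
      _ ≤ 1 * |i1 τ - i2 τ| + |s1 τ - s2 τ| * 1 := by
          gcongr
          · exact hb1 τ hτ
          · exact hb4 τ hτ
      _ = |s1 τ - s2 τ| + |i1 τ - i2 τ| := by ring
  have hBw : ∀ τ ∈ Icc (0:ℝ) T, |B τ| ≤ β * w τ := by
    intro τ hτ
    rw [hB, abs_mul]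
    exact mul_le_mul (habsB τ) (hprod τ hτ) (abs_nonneg _) hβ.le
  have hDw : ∀ τ ∈ Icc (0:ℝ) T, |D τ| ≤ (β + γ) * w τ := by
    intro τ hτ
    rw [hD]
    calc |(β - u1 τ) * (s1 τ * i1 τ - s2 τ * i2 τ) - γ * (i1 τ - i2 τ)|
        ≤ |(β - u1 τ) * (s1 τ * i1 τ - s2 τ * i2 τ)| + |γ * (i1 τ - i2 τ)| := abs_sub _ _
      _ = |β - u1 τ| * |s1 τ * i1 τ - s2 τ * i2 τ| + γ * |i1 τ - i2 τ| := by
          rw [abs_mul, abs_mul, abs_of_pos hγ]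
      _ ≤ β * w τ + γ * w τ := by
          have hA : |β - u1 τ| * |s1 τ * i1 τ - s2 τ * i2 τ| ≤ β * w τ :=
            mul_le_mul (ctrl_abs hβ humaxβ hu1 τ) (hprod τ hτ) (abs_nonneg _) hβ.le
          have hwge : |i1 τ - i2 τ| ≤ w τ := by
            rw [hw]; exact le_add_of_nonneg_left (abs_nonneg _)
          have hBn : γ * |i1 τ - i2 τ| ≤ γ * w τ :=
            mul_le_mul_of_nonneg_left hwge hγ.le
          exact add_le_add hA hBn
      _ = (β + γ) * w τ := by ring
  -- the integral inequality for w
  have hwineq : ∀ t ∈ Icc (0:ℝ) T, w t ≤ K * (∫ τ in (0:ℝ)..t, w τ) + 2 * η := by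
    intro t ht
    have hIccsub : Icc (0:ℝ) t ⊆ Icc (0:ℝ) T := Icc_subset_Icc (le_refl _) ht.2
    -- s-part
    have hΔs : s1 t - s2 t = (∫ τ in (0:ℝ)..t, B τ) + ∫ τ in (0:ℝ)..t, Cf τ := by
      have e1 : (∫ τ in (0:ℝ)..t, -((β - u1 τ) * s1 τ * i1 τ))
          - (∫ τ in (0:ℝ)..t, -((β - u2 τ) * s2 τ * i2 τ))
          = (∫ τ in (0:ℝ)..t, B τ) + ∫ τ in (0:ℝ)..t, Cf τ := by
        rw [← intervalIntegral.integral_sub (sir_int1 hβ humaxβ hu1 hs1 hi1 0 t)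
            (sir_int1 hβ humaxβ hu2 hs2 hi2 0 t),
          ← intervalIntegral.integral_add (hBint 0 t) (hCint 0 t)]
        apply intervalIntegral.integral_congr
        intro τ _
        show -((β - u1 τ) * s1 τ * i1 τ) - -((β - u2 τ) * s2 τ * i2 τ) = B τ + Cf τ
        simp only [hB, hCf]; ring
      rw [hseq1 t ht.1, hseq2 t ht.1, ← e1]; ring
    have hΔi : i1 t - i2 t = (∫ τ in (0:ℝ)..t, D τ) + ∫ τ in (0:ℝ)..t, (-Cf) τ := by
      have e1 : (∫ τ in (0:ℝ)..t, ((β - u1 τ) * s1 τ * i1 τ - γ * i1 τ))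
          - (∫ τ in (0:ℝ)..t, ((β - u2 τ) * s2 τ * i2 τ - γ * i2 τ))
          = (∫ τ in (0:ℝ)..t, D τ) + ∫ τ in (0:ℝ)..t, (-Cf) τ := by
        rw [← intervalIntegral.integral_sub (sir_int2 hβ humaxβ hu1 hs1 hi1 0 t)
            (sir_int2 hβ humaxβ hu2 hs2 hi2 0 t),
          ← intervalIntegral.integral_add (hDint 0 t) ((hCint 0 t).neg)]
        apply intervalIntegral.integral_congr
        intro τ _
        show ((β - u1 τ) * s1 τ * i1 τ - γ * i1 τ) - ((β - u2 τ) * s2 τ * i2 τ - γ * i2 τ)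
          = D τ + (-Cf) τ
        simp only [hD, hCf, Pi.neg_apply]; ring
      rw [hieq1 t ht.1, hieq2 t ht.1, ← e1]; ring
    have hintw : IntervalIntegrable w volume 0 t := hwcont.intervalIntegrable 0 t
    have hBbd : |∫ τ in (0:ℝ)..t, B τ| ≤ β * ∫ τ in (0:ℝ)..t, w τ := by
      calc |∫ τ in (0:ℝ)..t, B τ| ≤ ∫ τ in (0:ℝ)..t, |B τ| :=
            intervalIntegral.abs_integral_le_integral_abs (μ := volume) ht.1
        _ ≤ ∫ τ in (0:ℝ)..t, β * w τ := by
            refine intervalIntegral.integral_mono_on ht.1 (hBint 0 t).abs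
              ((continuous_const.mul hwcont).intervalIntegrable 0 t)
              (fun τ hτ => hBw τ (hIccsub hτ))
        _ = β * ∫ τ in (0:ℝ)..t, w τ := intervalIntegral.integral_const_mul _ _
    have hDbd : |∫ τ in (0:ℝ)..t, D τ| ≤ (β + γ) * ∫ τ in (0:ℝ)..t, w τ := by
      calc |∫ τ in (0:ℝ)..t, D τ| ≤ ∫ τ in (0:ℝ)..t, |D τ| :=
            intervalIntegral.abs_integral_le_integral_abs (μ := volume) ht.1
        _ ≤ ∫ τ in (0:ℝ)..t, (β + γ) * w τ := by
            refine intervalIntegral.integral_mono_on ht.1 (hDint 0 t).abs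
              ((continuous_const.mul hwcont).intervalIntegrable 0 t)
              (fun τ hτ => hDw τ (hIccsub hτ))
        _ = (β + γ) * ∫ τ in (0:ℝ)..t, w τ := intervalIntegral.integral_const_mul _ _
    have hCbd : |∫ τ in (0:ℝ)..t, Cf τ| ≤ η := hη t ht
    have hCbd' : |∫ τ in (0:ℝ)..t, (-Cf) τ| ≤ η := by
      simp only [Pi.neg_apply]
      rw [intervalIntegral.integral_neg, abs_neg]; exact hCbd
    have h1 : |s1 t - s2 t| ≤ β * (∫ τ in (0:ℝ)..t, w τ) + η := by
      rw [hΔs]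
      calc |(∫ τ in (0:ℝ)..t, B τ) + ∫ τ in (0:ℝ)..t, Cf τ|
          ≤ |∫ τ in (0:ℝ)..t, B τ| + |∫ τ in (0:ℝ)..t, Cf τ| := abs_add_le _ _
        _ ≤ β * (∫ τ in (0:ℝ)..t, w τ) + η := add_le_add hBbd hCbd
    have h2 : |i1 t - i2 t| ≤ (β + γ) * (∫ τ in (0:ℝ)..t, w τ) + η := by
      rw [hΔi]
      calc |(∫ τ in (0:ℝ)..t, D τ) + ∫ τ in (0:ℝ)..t, (-Cf) τ|
          ≤ |∫ τ in (0:ℝ)..t, D τ| + |∫ τ in (0:ℝ)..t, (-Cf) τ| := abs_add_le _ _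
        _ ≤ (β + γ) * (∫ τ in (0:ℝ)..t, w τ) + η := add_le_add hDbd hCbd'
    have hsum := add_le_add h1 h2
    have hwt : w t = |s1 t - s2 t| + |i1 t - i2 t| := rfl
    rw [hwt, hK]
    linarith [hsum]
  -- Gronwall
  set φ : ℝ → ℝ := fun t => ∫ τ in (0:ℝ)..t, w τ with hφ
  have hφderiv : ∀ t : ℝ, HasDerivAt φ (w t) t :=
    fun t => (hwcont.integral_hasStrictDerivAt 0 t).hasDerivAt
  have hφnn : ∀ t ∈ Icc (0:ℝ) T, 0 ≤ φ t :=
    fun t ht => intervalIntegral.integral_nonneg ht.1 (fun τ _ => hwnn τ)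
  have hgron := norm_le_gronwallBound_of_norm_deriv_right_le (f := φ) (f' := w)
    (δ := 0) (K := K) (ε := 2 * η) (a := 0) (b := T)
    (fun t _ => (hφderiv t).continuousAt.continuousWithinAt)
    (fun t _ => (hφderiv t).hasDerivWithinAt)
    (by simp [hφ]) ?_
  · intro t ht
    have hφb := hgron t ht
    rw [Real.norm_eq_abs, abs_of_nonneg (hφnn t ht), sub_zero,
      gronwallBound_of_K_ne_0 (ne_of_gt hKpos)] at hφb
    have hwb := hwineq t ht
    have hexp : Real.exp (K * t) ≤ Real.exp (K * T) :=
      Real.exp_le_exp.2 (by nlinarith [ht.2, hKpos])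
    have : w t ≤ 2 * η * Real.exp (K * t) := by
      have hKφ : K * φ t ≤ 2 * η * Real.exp (K * t) - 2 * η := by
        have := mul_le_mul_of_nonneg_left hφb hKpos.le
        calc K * φ t ≤ K * (0 * Real.exp (K * t) + 2 * η / K * (Real.exp (K * t) - 1)) := this
          _ = 2 * η * Real.exp (K * t) - 2 * η := by field_simp; ring
      linarith
    calc |s1 t - s2 t| + |i1 t - i2 t| = w t := by rw [hw]
      _ ≤ 2 * η * Real.exp (K * t) := this
      _ ≤ 2 * η * Real.exp (K * T) :=
          mul_le_mul_of_nonneg_left hexp (by linarith)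
  · intro t ht
    rw [Real.norm_eq_abs, Real.norm_eq_abs, abs_of_nonneg (hwnn t),
      abs_of_nonneg (hφnn t ⟨ht.1, ht.2.le⟩)]
    exact hwineq t ⟨ht.1, ht.2.le⟩

lemma unif_small_of_lipschitz {F : ℕ → ℝ → ℝ} {L T η : ℝ} (hL : 0 < L) (hη : 0 < η)
    (hlip : ∀ n, ∀ x ∈ Icc (0:ℝ) T, ∀ y ∈ Icc (0:ℝ) T, |F n x - F n y| ≤ L * |x - y|)
    (hpt : ∀ t ∈ Icc (0:ℝ) T, Tendsto (fun n => F n t) atTop (nhds 0)) :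
    ∀ᶠ n in atTop, ∀ t ∈ Icc (0:ℝ) T, |F n t| ≤ η := by
  set r : ℝ := η / (2 * L) with hr
  have hrpos : 0 < r := by positivity
  obtain ⟨G, hGmem, hGcov⟩ := (isCompact_Icc (a := (0:ℝ)) (b := T)).elim_nhds_subcover
    (fun c => Metric.ball c r) (fun c _ => Metric.ball_mem_nhds c hrpos)
  have hev : ∀ᶠ n in atTop, ∀ c ∈ G, |F n c| ≤ η/2 := by
    rw [Filter.eventually_all_finset]
    intro c hc
    have h1 := hpt c (hGmem c hc)
    have h2 := h1.eventually_lt_const (show (0:ℝ) < η/2 by positivity)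
    have h3 := h1.eventually_const_lt (show -(η/2) < (0:ℝ) by linarith)
    filter_upwards [h2, h3] with n hn2 hn3
    rw [abs_le]; exact ⟨by linarith, hn2.le⟩
  filter_upwards [hev] with n hn t ht
  obtain ⟨c, hcG, hctball⟩ : ∃ c ∈ G, t ∈ Metric.ball c r := by
    have := hGcov ht
    simpa using this
  have hcIcc : c ∈ Icc (0:ℝ) T := hGmem c hcG
  have hdist : |t - c| < r := by
    rw [← Real.dist_eq]; exact Metric.mem_ball.1 hctball
  calc |F n t| ≤ |F n t - F n c| + |F n c| := by
        have := abs_add_le (F n t - F n c) (F n c); simpa using this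
    _ ≤ L * |t - c| + η/2 := add_le_add (hlip n t ht c hcIcc) (hn c hcG)
    _ ≤ L * r + η/2 := by
        have := mul_le_mul_of_nonneg_left hdist.le hL.le
        linarith
    _ ≤ η := by
        have he : L * r = η / 2 := by rw [hr]; field_simp
        linarith

lemma ctrl_abs' {umax : ℝ} {u : ℝ → ℝ} (hu : IsControl umax u) : ∀ x, |u x| ≤ umax := by
  intro x
  obtain ⟨h1, h2⟩ := hu.2 x
  rw [abs_of_nonneg h1]; exact h2

/-- Weak* convergence of controls implies uniform convergence of the corresponding
trajectories on every bounded subinterval. -/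
theorem statement15 (β γ umax : ℝ) (hβ : 0 < β) (hγ : 0 < γ)
    (humax : 0 < umax) (humaxβ : umax < β)
    (i₀ s₀ : ℝ) (hi₀ : i₀ ∈ Set.Ioo (0:ℝ) 1) (hs₀ : s₀ ∈ Set.Ioc (0:ℝ) (1 - i₀))
    (un : ℕ → ℝ → ℝ) (sn iN : ℕ → ℝ → ℝ) (u s i : ℝ → ℝ)
    (hun : ∀ n, IsControl umax (un n)) (hu : IsControl umax u)
    (hsoln : ∀ n, SIRSol β γ (un n) (sn n) (iN n) s₀ i₀)
    (hsol : SIRSol β γ u s i s₀ i₀)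
    (hweak : WeakStarLim un u) :
    ∀ a b : ℝ, 0 ≤ a →
      TendstoUniformlyOn (fun n => sn n) s Filter.atTop (Set.Icc a b) ∧
      TendstoUniformlyOn (fun n => iN n) i Filter.atTop (Set.Icc a b) := by
  intro a b ha
  set T : ℝ := max b 0 with hTdef
  have hT : (0:ℝ) ≤ T := le_max_right _ _
  have hsub : Icc a b ⊆ Icc (0:ℝ) T :=
    fun x hx => ⟨ha.trans hx.1, hx.2.trans (le_max_left _ _)⟩
  have hs : Continuous s := hsol.1
  have hi : Continuous i := hsol.2.1
  have hsum : s₀ + i₀ ≤ 1 := by have := hs₀.2; linarith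
  -- uniform bounds
  have hbd : ∀ t ∈ Icc (0:ℝ) T, 0 < s t ∧ 0 < i t ∧ s t + i t ≤ 1 :=
    sir_bounds hβ hγ humaxβ hu hsol hi₀.1 hs₀.1 hsum hT
  have hbdn : ∀ n, ∀ t ∈ Icc (0:ℝ) T, 0 < sn n t ∧ 0 < iN n t ∧ sn n t + iN n t ≤ 1 :=
    fun n => sir_bounds hβ hγ humaxβ (hun n) (hsoln n) hi₀.1 hs₀.1 hsum hT
  have habs_s : ∀ t ∈ Icc (0:ℝ) T, |s t| ≤ 1 := by
    intro t ht
    obtain ⟨h1, h2, h3⟩ := hbd t ht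
    rw [abs_of_pos h1]; linarith
  have habs_i : ∀ t ∈ Icc (0:ℝ) T, |i t| ≤ 1 := by
    intro t ht
    obtain ⟨h1, h2, h3⟩ := hbd t ht
    rw [abs_of_pos h2]; linarith
  have habs_sn : ∀ n, ∀ t ∈ Icc (0:ℝ) T, |sn n t| ≤ 1 := by
    intro n t ht
    obtain ⟨h1, h2, h3⟩ := hbdn n t ht
    rw [abs_of_pos h1]; linarith
  -- the error functionals
  set E : ℕ → ℝ → ℝ := fun n t => ∫ τ in (0:ℝ)..t, (un n τ - u τ) * (s τ * i τ) with hE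
  have habsd : ∀ n, ∀ x, |un n x - u x| ≤ umax := by
    intro n x
    obtain ⟨h1, h2⟩ := (hun n).2 x; obtain ⟨h3, h4⟩ := hu.2 x
    rw [abs_le]; constructor <;> linarith
  have hEint : ∀ n, ∀ c d : ℝ, IntervalIntegrable
      (fun τ => (un n τ - u τ) * (s τ * i τ)) volume c d :=
    fun n c d => II_mul ((hun n).1.sub hu.1) (habsd n) (hs.mul hi) c d
  -- equi-Lipschitz property of E on [0,T]
  have hlip : ∀ n, ∀ x ∈ Icc (0:ℝ) T, ∀ y ∈ Icc (0:ℝ) T,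
      |E n x - E n y| ≤ umax * |x - y| := by
    intro n x hx y hy
    have hadj : E n x - E n y = ∫ τ in y..x, (un n τ - u τ) * (s τ * i τ) := by
      rw [hE]
      have := intervalIntegral.integral_add_adjacent_intervals
        (hEint n 0 y) (hEint n y x)
      simp only []
      linarith [this]
    have hIsub : Set.uIoc y x ⊆ Icc (0:ℝ) T := by
      have h1 : Set.uIoc y x ⊆ Icc (min y x) (max y x) := Set.uIoc_subset_uIcc
      refine h1.trans (Icc_subset_Icc ?_ ?_)
      · exact le_min hy.1 hx.1
      · exact max_le hy.2 hx.2
    have hbound : ∀ τ ∈ Set.uIoc y x, ‖(un n τ - u τ) * (s τ * i τ)‖ ≤ umax := by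
      intro τ hτ
      have hτT := hIsub hτ
      rw [Real.norm_eq_abs, abs_mul]
      calc |un n τ - u τ| * |s τ * i τ| ≤ umax * 1 := by
            refine mul_le_mul (habsd n τ) ?_ (abs_nonneg _) humax.le
            rw [abs_mul]
            calc |s τ| * |i τ| ≤ 1 * 1 :=
                  mul_le_mul (habs_s τ hτT) (habs_i τ hτT) (abs_nonneg _) zero_le_one
              _ = 1 := by ring
        _ = umax := by ring
    have hnorm := intervalIntegral.norm_integral_le_of_norm_le_const hbound
    rw [Real.norm_eq_abs] at hnorm
    rw [hadj]
    exact hnorm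
  -- pointwise convergence of E to 0
  have hpt : ∀ t ∈ Icc (0:ℝ) T, Tendsto (fun n => E n t) atTop (nhds 0) := by
    intro t ht
    set g : ℝ → ℝ := (Ioc (0:ℝ) t).indicator (fun τ => s τ * i τ) with hgdef
    have hginteg : IntegrableOn g (Ioi (0:ℝ)) volume := by
      have h1 : IntegrableOn (fun τ => s τ * i τ) (Ioc (0:ℝ) t) volume :=
        (hs.mul hi).integrableOn_Ioc
      exact ((integrable_indicator_iff measurableSet_Ioc).2 h1).integrableOn
    have hkey : ∀ v : ℝ → ℝ, (∫ τ in Ioi (0:ℝ), v τ * g τ)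
        = ∫ τ in (0:ℝ)..t, v τ * (s τ * i τ) := by
      intro v
      have e : (fun τ => v τ * g τ)
          = (Ioc (0:ℝ) t).indicator (fun τ => v τ * (s τ * i τ)) := by
        funext τ
        by_cases hτ : τ ∈ Ioc (0:ℝ) t
        · rw [hgdef]; simp [indicator_of_mem hτ]
        · rw [hgdef]; simp [indicator_of_notMem hτ]
      rw [e, MeasureTheory.integral_indicator measurableSet_Ioc,
        Measure.restrict_restrict measurableSet_Ioc,
        inter_eq_left.2 Ioc_subset_Ioi_self,
        intervalIntegral.integral_of_le ht.1]
    have h2 : Tendsto (fun n => ∫ τ in (0:ℝ)..t, un n τ * (s τ * i τ)) atTop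
        (nhds (∫ τ in (0:ℝ)..t, u τ * (s τ * i τ))) := by
      have h3 := hweak g hginteg
      rw [hkey u] at h3
      exact h3.congr (fun n => hkey (un n))
    have h4 : (fun n => E n t) = fun n =>
        (∫ τ in (0:ℝ)..t, un n τ * (s τ * i τ))
          - ∫ τ in (0:ℝ)..t, u τ * (s τ * i τ) := by
      funext n
      rw [hE]
      rw [← intervalIntegral.integral_sub (f := fun τ => un n τ * (s τ * i τ))
        (g := fun τ => u τ * (s τ * i τ))
        (II_mul (hun n).1 (ctrl_abs' (hun n)) (hs.mul hi) 0 t)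
        (II_mul hu.1 (ctrl_abs' hu) (hs.mul hi) 0 t)]
      apply intervalIntegral.integral_congr
      intro τ _; ring
    rw [h4]
    have h5 := h2.sub (tendsto_const_nhds
      (x := ∫ τ in (0:ℝ)..t, u τ * (s τ * i τ)) (f := atTop))
    simpa using h5
  -- main uniform estimate
  have huni : ∀ ε : ℝ, 0 < ε → ∀ᶠ n in atTop, ∀ t ∈ Icc (0:ℝ) T,
      |sn n t - s t| + |iN n t - i t| ≤ ε / 2 := by
    intro ε hε
    set K : ℝ := 2*β + γ with hK
    set η : ℝ := ε / (4 * Real.exp (K*T)) with hη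
    have hexppos : 0 < Real.exp (K*T) := Real.exp_pos _
    have hηpos : 0 < η := by rw [hη]; positivity
    filter_upwards [unif_small_of_lipschitz humax hηpos hlip hpt] with n hn
    intro t ht
    have hKE := key_est hβ hγ humaxβ hT (hun n) hu (hsoln n) hsol
      (habs_sn n) habs_i hn t ht
    have harith : 2 * η * Real.exp (K*T) = ε / 2 := by
      rw [hη]
      field_simp
      ring
    linarith [hKE, harith.le, harith.ge]
  constructor
  · rw [Metric.tendstoUniformlyOn_iff]
    intro ε hε
    filter_upwards [huni ε hε] with n hn t ht
    have h1 := hn t (hsub ht)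
    rw [Real.dist_eq]
    have h2 : |s t - sn n t| = |sn n t - s t| := abs_sub_comm _ _
    rw [h2]
    have := abs_nonneg (iN n t - i t)
    linarith
  · rw [Metric.tendstoUniformlyOn_iff]
    intro ε hε
    filter_upwards [huni ε hε] with n hn t ht
    have h1 := hn t (hsub ht)
    rw [Real.dist_eq]
    have h2 : |i t - iN n t| = |iN n t - i t| := abs_sub_comm _ _
    rw [h2]
    have := abs_nonneg (sn n t - s t)
    linarith
end
end

section
/- Let (s,i) be the solution of the controlled SIR system with control u, and suppose i(t) = i_c for all t in an interval (t₁,t₂), where i_c ∈ (0, i_M] is a constant. Then there is a constant k_s = s(t₁) + γ·i_c·t₁ = s(t₂) + γ·i_c·t₂ such that s(t) = k_s − γ·i_c·t on (t₁,t₂) and u(t) = β − γ/s(t) = β − γ/(k_s − γ·i_c·t) for a.e. t ∈ (t₁,t₂). Moreover, since u takes values in [0,u_max], one has s(t₁) ≤ γ/(β − u_max) and s(t₂) ≥ γ/β. -/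
open MeasureTheory Filter Set intervalIntegral
open scoped ENNReal

noncomputable section

private lemma aux_intInt {v w : ℝ → ℝ} (hv : Measurable v) {C : ℝ}
    (hC : ∀ t, |v t| ≤ C) (hw : Continuous w) (a b : ℝ) :
    IntervalIntegrable (fun τ => v τ * w τ) volume a b := by
  rw [intervalIntegrable_iff]
  have hwi : IntegrableOn w (Set.uIoc a b) := by
    rw [← intervalIntegrable_iff]; exact hw.intervalIntegrable a b
  exact hwi.bdd_mul hv.aestronglyMeasurable.restrict (Filter.Eventually.of_forall fun x => by simpa using hC x)

/-- Characterization of boundary (constant-`i`) arcs: if `i ≡ i_c` on `(t₁,t₂)`, then `s` is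
affine there, `u = β - γ/s` a.e., and `s(t₁) ≤ γ/(β-u_max)`, `s(t₂) ≥ γ/β`. -/
theorem statement17 (β γ umax iM : ℝ) (hβ : 0 < β) (hγ : 0 < γ)
    (humax : 0 < umax) (humaxβ : umax < β) (hiM : iM ∈ Set.Ioo (0:ℝ) 1)
    (u : ℝ → ℝ) (hu : IsControl umax u)
    (i₀ s₀ : ℝ) (hi₀ : i₀ ∈ Set.Ioo (0:ℝ) 1) (hs₀ : s₀ ∈ Set.Ioc (0:ℝ) (1 - i₀))
    (s i : ℝ → ℝ) (hsol : SIRSol β γ u s i s₀ i₀)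
    (t₁ t₂ : ℝ) (ht₁ : 0 ≤ t₁) (ht₁₂ : t₁ < t₂)
    (ic : ℝ) (hic : ic ∈ Set.Ioc (0:ℝ) iM)
    (hconst : ∀ t ∈ Set.Ioo t₁ t₂, i t = ic) :
    ∃ ks : ℝ, ks = s t₁ + γ * ic * t₁ ∧ ks = s t₂ + γ * ic * t₂ ∧
      (∀ t ∈ Set.Ioo t₁ t₂, s t = ks - γ * ic * t) ∧
      (∀ᵐ t : ℝ, t ∈ Set.Ioo t₁ t₂ →
        u t = β - γ / s t ∧ u t = β - γ / (ks - γ * ic * t)) ∧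
      s t₁ ≤ γ / (β - umax) ∧ γ / β ≤ s t₂ := by
  
  obtain ⟨hs_cont, hi_cont, hs_eq, hi_eq⟩ := hsol
  obtain ⟨hu_meas, hu_mem⟩ := hu
  have hicpos : 0 < ic := hic.1
  have hβu : Measurable (fun τ => β - u τ) := measurable_const.sub hu_meas
  have hβuC : ∀ t, |β - u t| ≤ β := by
    intro t
    have h := hu_mem t
    rw [abs_le]
    constructor
    · linarith [h.2]
    · linarith [h.1]
  have hFint : ∀ a b : ℝ, IntervalIntegrable
      (fun τ => (β - u τ) * s τ * i τ - γ * i τ) volume a b := by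
    intro a b
    have h1 : IntervalIntegrable (fun τ => (β - u τ) * (s τ * i τ)) volume a b :=
      aux_intInt hβu hβuC (hs_cont.mul hi_cont) a b
    have h2 : IntervalIntegrable (fun τ => γ * i τ) volume a b :=
      (continuous_const.mul hi_cont).intervalIntegrable a b
    simpa [mul_assoc] using h1.sub h2
  have hF2int : ∀ a b : ℝ, IntervalIntegrable
      (fun τ => -((β - u τ) * s τ * i τ)) volume a b := by
    intro a b
    have h1 : IntervalIntegrable (fun τ => (β - u τ) * (s τ * i τ)) volume a b :=
      aux_intInt hβu hβuC (hs_cont.mul hi_cont) a b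
    have h2 := h1.neg
    simp only [mul_assoc]
    exact h2
  have hgint : ∀ a b : ℝ, IntervalIntegrable
      (fun τ => (β - u τ) * s τ - γ) volume a b := by
    intro a b
    have h1 := aux_intInt hβu hβuC hs_cont a b
    simpa using h1.sub (_root_.intervalIntegrable_const (c := γ))
  -- i equals ic on the closed interval
  have hicc : ∀ t ∈ Set.Icc t₁ t₂, i t = ic := by
    intro t ht
    have ht' : t ∈ closure (Set.Ioo t₁ t₂) := by rwa [closure_Ioo ht₁₂.ne]
    have hne : (nhdsWithin t (Set.Ioo t₁ t₂)).NeBot :=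
      mem_closure_iff_nhdsWithin_neBot.1 ht'
    have h1 : Tendsto i (nhdsWithin t (Set.Ioo t₁ t₂)) (nhds (i t)) :=
      (hi_cont.tendsto t).mono_left nhdsWithin_le_nhds
    have h2 : Tendsto i (nhdsWithin t (Set.Ioo t₁ t₂)) (nhds ic) := by
      refine Tendsto.congr' ?_ tendsto_const_nhds
      filter_upwards [self_mem_nhdsWithin] with x hx
      exact (hconst x hx).symm
    exact tendsto_nhds_unique h1 h2
  have haeIoo : ∀ᵐ τ : ℝ, τ ≠ t₂ := by
    have h0 : volume ({t₂} : Set ℝ) = 0 := measure_singleton t₂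
    rw [measure_eq_zero_iff_ae_notMem] at h0
    filter_upwards [h0] with τ hτ
    simpa using hτ
  -- zero integral of the i-equation integrand
  have hFzero : ∀ t ∈ Set.Icc t₁ t₂,
      (∫ τ in t₁..t, ((β - u τ) * s τ * i τ - γ * i τ)) = 0 := by
    intro t ht
    have ht0 : (0:ℝ) ≤ t := le_trans ht₁ ht.1
    have e1 := hi_eq t ht0
    have e2 := hi_eq t₁ ht₁
    have hsub := intervalIntegral.integral_interval_sub_left (hFint 0 t) (hFint 0 t₁)
    have hit : i t = ic := hicc t ht
    have hit1 : i t₁ = ic := hicc t₁ ⟨le_refl _, ht₁₂.le⟩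
    rw [e1] at hit
    rw [e2] at hit1
    rw [← hsub]
    linarith
  -- zero integral of (β-u)s - γ
  have hGzero : ∀ t ∈ Set.Icc t₁ t₂,
      (∫ τ in t₁..t, ((β - u τ) * s τ - γ)) = 0 := by
    intro t ht
    have hcong : (∫ τ in t₁..t, ((β - u τ) * s τ * i τ - γ * i τ))
        = ∫ τ in t₁..t, ic * ((β - u τ) * s τ - γ) := by
      apply intervalIntegral.integral_congr_ae
      filter_upwards [haeIoo] with τ hτ2 hτ
      rw [Set.uIoc_of_le ht.1] at hτ
      have hτIoo : τ ∈ Set.Ioo t₁ t₂ :=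
        ⟨hτ.1, lt_of_le_of_ne (le_trans hτ.2 ht.2) hτ2⟩
      rw [hconst τ hτIoo]; ring
    have h0 := hFzero t ht
    rw [hcong, intervalIntegral.integral_const_mul] at h0
    exact (mul_eq_zero.mp h0).resolve_left (ne_of_gt hicpos)
  -- s is affine on [t₁, t₂]
  have hks : ∀ t ∈ Set.Icc t₁ t₂, s t = (s t₁ + γ * ic * t₁) - γ * ic * t := by
    intro t ht
    have ht0 : (0:ℝ) ≤ t := le_trans ht₁ ht.1
    have e1 := hs_eq t ht0
    have e2 := hs_eq t₁ ht₁
    have hsub := intervalIntegral.integral_interval_sub_left (hF2int 0 t) (hF2int 0 t₁)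
    have hcong : (∫ τ in t₁..t, -((β - u τ) * s τ * i τ))
        = ∫ τ in t₁..t, ((-ic) * ((β - u τ) * s τ - γ) + (-(γ * ic))) := by
      apply intervalIntegral.integral_congr_ae
      filter_upwards [haeIoo] with τ hτ2 hτ
      rw [Set.uIoc_of_le ht.1] at hτ
      have hτIoo : τ ∈ Set.Ioo t₁ t₂ :=
        ⟨hτ.1, lt_of_le_of_ne (le_trans hτ.2 ht.2) hτ2⟩
      rw [hconst τ hτIoo]; ring
    have hval : (∫ τ in t₁..t, -((β - u τ) * s τ * i τ)) = -(γ * ic) * (t - t₁) := by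
      rw [hcong, intervalIntegral.integral_add ((hgint t₁ t).const_mul _)
        (_root_.intervalIntegrable_const), intervalIntegral.integral_const_mul,
        hGzero t ht, intervalIntegral.integral_const]
      simp [mul_comm]
    have hst : s t - s t₁ = ∫ τ in t₁..t, -((β - u τ) * s τ * i τ) := by
      rw [e1, e2, ← hsub]; ring
    have := hst.trans hval
    linear_combination this
  -- the main a.e. identity via Lebesgue differentiation
  have hglocint : LocallyIntegrable (fun τ => (β - u τ) * s τ - γ) volume := by
    intro x
    refine ⟨Set.Icc (x-1) (x+1), Icc_mem_nhds (by linarith) (by linarith), ?_⟩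
    rw [integrableOn_Icc_iff_integrableOn_Ioc,
      ← Set.uIoc_of_le (by linarith : x - 1 ≤ x + 1), ← intervalIntegrable_iff]
    exact hgint _ _
  have hmain : ∀ᵐ τ : ℝ, τ ∈ Set.Ioo t₁ t₂ → (β - u τ) * s τ = γ := by
    filter_upwards [IsUnifLocDoublingMeasure.ae_tendsto_average volume hglocint 1] with x hx hxIoo
    have htend : Tendsto (fun j => ⨍ y in Metric.closedBall x j, ((β - u y) * s y - γ))
        (nhdsWithin 0 (Set.Ioi 0)) (nhds ((β - u x) * s x - γ)) := by
      have hball : ∀ᶠ j in nhdsWithin (0:ℝ) (Set.Ioi 0),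
          x ∈ Metric.closedBall x (1 * j) := by
        filter_upwards [self_mem_nhdsWithin] with j hj
        have : (0:ℝ) ≤ 1 * j := by simpa using (le_of_lt hj)
        exact Metric.mem_closedBall_self this
      exact hx (ι := ℝ) (l := nhdsWithin (0:ℝ) (Set.Ioi 0)) (fun _ => x) id tendsto_id hball
    have hδpos : (0:ℝ) < min (x - t₁) (t₂ - x) :=
      lt_min (by linarith [hxIoo.1]) (by linarith [hxIoo.2])
    have hzero : Tendsto (fun j => ⨍ y in Metric.closedBall x j, ((β - u y) * s y - γ))
        (nhdsWithin 0 (Set.Ioi 0)) (nhds 0) := by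
      refine Tendsto.congr' ?_ tendsto_const_nhds
      filter_upwards [Ioo_mem_nhdsGT hδpos] with j hj
      have hj1 : 0 < j := hj.1
      have hj2 : j < min (x - t₁) (t₂ - x) := hj.2
      have hsub1 : x - j ∈ Set.Icc t₁ t₂ := by
        constructor
        · have := lt_min_iff.mp hj2
          linarith [this.1]
        · linarith [hxIoo.2]
      have hsub2 : x + j ∈ Set.Icc t₁ t₂ := by
        constructor
        · linarith [hxIoo.1]
        · have := lt_min_iff.mp hj2
          linarith [this.2]
      have hint0 : (∫ y in Metric.closedBall x j, ((β - u y) * s y - γ)) = 0 := by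
        rw [Real.closedBall_eq_Icc, integral_Icc_eq_integral_Ioc,
          ← intervalIntegral.integral_of_le (by linarith : x - j ≤ x + j)]
        have hd := intervalIntegral.integral_interval_sub_left
          (hgint t₁ (x+j)) (hgint t₁ (x-j))
        rw [hGzero _ hsub2, hGzero _ hsub1] at hd
        simpa using hd.symm
      rw [setAverage_eq, hint0]
      simp
    have h0 : (β - u x) * s x - γ = 0 := tendsto_nhds_unique htend hzero
    linarith
  set ks : ℝ := s t₁ + γ * ic * t₁ with hksdef
  -- derived pointwise facts from hmain
  have hmain2 : ∀ᵐ τ : ℝ, τ ∈ Set.Ioo t₁ t₂ →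
      (u τ = β - γ / s τ ∧ γ / β ≤ s τ ∧ s τ ≤ γ / (β - umax)) := by
    filter_upwards [hmain] with x hx hxIoo
    have heq := hx hxIoo
    have hbu : 0 < β - u x := by linarith [(hu_mem x).2]
    have hbumax : 0 < β - umax := by linarith
    have hsx : s x = γ / (β - u x) := by
      rw [eq_div_iff (ne_of_gt hbu)]
      linarith [heq, mul_comm (β - u x) (s x)]
    have hsxne : s x ≠ 0 := by
      rw [hsx]
      positivity
    refine ⟨?_, ?_, ?_⟩
    · have h1 : β - u x = γ / s x := by
        rw [eq_div_iff hsxne]; linarith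
      linarith
    · rw [hsx]
      apply div_le_div_of_nonneg_left hγ.le hbu
      linarith [(hu_mem x).1]
    · rw [hsx]
      apply div_le_div_of_nonneg_left hγ.le hbumax
      linarith [(hu_mem x).2]
  have hkst2 : ks = s t₂ + γ * ic * t₂ := by
    have := hks t₂ ⟨ht₁₂.le, le_refl t₂⟩
    linarith
  have hsIoo : ∀ t ∈ Set.Ioo t₁ t₂, s t = ks - γ * ic * t := by
    intro t ht
    have := hks t ⟨ht.1.le, ht.2.le⟩
    exact this
  have haegoal : ∀ᵐ t : ℝ, t ∈ Set.Ioo t₁ t₂ →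
      u t = β - γ / s t ∧ u t = β - γ / (ks - γ * ic * t) := by
    filter_upwards [hmain2] with x hx hxIoo
    refine ⟨(hx hxIoo).1, ?_⟩
    rw [← hsIoo x hxIoo]
    exact (hx hxIoo).1
  -- the good set S
  set S : Set ℝ := {x | x ∈ Set.Ioo t₁ t₂ ∧ γ / β ≤ s x ∧ s x ≤ γ / (β - umax)} with hSdef
  have hSnull : volume (Set.Ioo t₁ t₂ \ S) = 0 := by
    have h := ae_iff.mp hmain2
    refine measure_mono_null ?_ h
    intro x hx
    simp only [Set.mem_setOf_eq, not_forall]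
    refine ⟨hx.1, ?_⟩
    intro hcon
    exact hx.2 ⟨hx.1, hcon.2⟩
  have hclosS : ∀ c ∈ Set.Icc t₁ t₂, c ∈ closure S := by
    intro c hc
    rw [mem_closure_iff]
    intro U hU hcU
    have hc' : c ∈ closure (Set.Ioo t₁ t₂) := by rw [closure_Ioo ht₁₂.ne]; exact hc
    have hV : (U ∩ Set.Ioo t₁ t₂).Nonempty := mem_closure_iff.1 hc' U hU hcU
    have hpos : 0 < volume (U ∩ Set.Ioo t₁ t₂) :=
      (hU.inter isOpen_Ioo).measure_pos volume hV
    by_contra hempty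
    have hsubset : U ∩ Set.Ioo t₁ t₂ ⊆ Set.Ioo t₁ t₂ \ S := by
      intro x hx
      refine ⟨hx.2, fun hxS => hempty ⟨x, hx.1, hxS⟩⟩
    exact absurd (measure_mono_null hsubset hSnull) (ne_of_gt hpos)
  have haffine : Continuous (fun x : ℝ => ks - γ * ic * x) :=
    continuous_const.sub (continuous_const.mul continuous_id)
  have hS_sx : ∀ x ∈ S, ks - γ * ic * x = s x := by
    intro x hx
    exact (hsIoo x hx.1).symm
  have hleft : s t₁ ≤ γ / (β - umax) := by
    have hne : (nhdsWithin t₁ S).NeBot :=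
      mem_closure_iff_nhdsWithin_neBot.1 (hclosS t₁ ⟨le_refl _, ht₁₂.le⟩)
    have htf : Tendsto (fun x : ℝ => ks - γ * ic * x) (nhdsWithin t₁ S)
        (nhds (ks - γ * ic * t₁)) :=
      (haffine.tendsto t₁).mono_left nhdsWithin_le_nhds
    have hb : ks - γ * ic * t₁ ≤ γ / (β - umax) := by
      apply le_of_tendsto htf
      filter_upwards [self_mem_nhdsWithin] with x hx
      rw [hS_sx x hx]
      exact hx.2.2
    have := hks t₁ ⟨le_refl _, ht₁₂.le⟩
    linarith
  have hright : γ / β ≤ s t₂ := by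
    have hne : (nhdsWithin t₂ S).NeBot :=
      mem_closure_iff_nhdsWithin_neBot.1 (hclosS t₂ ⟨ht₁₂.le, le_refl _⟩)
    have htf : Tendsto (fun x : ℝ => ks - γ * ic * x) (nhdsWithin t₂ S)
        (nhds (ks - γ * ic * t₂)) :=
      (haffine.tendsto t₂).mono_left nhdsWithin_le_nhds
    have hb : γ / β ≤ ks - γ * ic * t₂ := by
      apply ge_of_tendsto htf
      filter_upwards [self_mem_nhdsWithin] with x hx
      rw [hS_sx x hx]
      exact hx.2.1
    have := hks t₂ ⟨ht₁₂.le, le_refl _⟩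
    linarith
  exact ⟨ks, hksdef, hkst2, hsIoo, haegoal, hleft, hright⟩
end
end
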